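/- In the semigroup S = ℤ₊ \ {1} = {0, 2, 3, 4, ...} under addition, the constructible right ideals satisfy (2+S) ∪ (3+S) = (−3)+(2+S), where a+S = {a+x : x ∈ S} and (−a)+A = {x ∈ S : x+a ∈ A}. Explicitly: {2,4,5,6,...} ∪ {3,5,6,7,...} = {2,3,4,5,...}. -/
import Mathlib


/-- In the semigroup `S = ℤ₊ \ {1} = {0,2,3,...}` under addition, the
constructible right ideals satisfy `(2+S) ∪ (3+S) = (−3)+(2+S)`, and
explicitly this set is `{2,3,4,...}`. -/
theorem stmt12 :
    let S : Set ℕ := {n | n ≠ 1}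
    ((fun x => 2 + x) '' S) ∪ ((fun x => 3 + x) '' S)
        = {x ∈ S | x + 3 ∈ (fun x => 2 + x) '' S} ∧
    ((fun x => 2 + x) '' S) ∪ ((fun x => 3 + x) '' S) = {n : ℕ | 2 ≤ n} := by
  intro S
  have hU : ((fun x => 2 + x) '' S) ∪ ((fun x => 3 + x) '' S) = {n : ℕ | 2 ≤ n} := by
    ext n
    simp only [Set.mem_union, Set.mem_image, Set.mem_setOf_eq, S]
    constructor
    · rintro (⟨x, _, rfl⟩ | ⟨x, _, rfl⟩) <;> omega
    · intro hn
      rcases eq_or_ne n 3 with rfl | h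
      · exact Or.inr ⟨0, by omega, rfl⟩
      · exact Or.inl ⟨n - 2, by omega, by omega⟩
  refine ⟨?_, hU⟩
  rw [hU]
  ext n
  simp only [Set.mem_setOf_eq, Set.mem_image, S]
  constructor
  · intro hn
    exact ⟨by omega, ⟨n + 1, by omega, by omega⟩⟩
  · rintro ⟨h1, x, hx, hxe⟩
    omega
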